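/- Let γ ∈ GL_{N+1}(𝔽_q), regarded as a k̄-linear automorphism of k̄^{N+1}, and let V ⊆ k̄^{N+1} be a proper γ-invariant subspace. Let P ∈ ℙ(V) ⊆ ℙ^N(k̄) be a projective point that does not lie in ℙ(W) for any proper γ-invariant subspace W strictly contained in V. Then the orbit of P under the cyclic group generated by the projective automorphism of ℙ^N(k̄) induced by γ has exactly exp V elements. -/
import Mathlib

/-- The `k̄`-linear endomorphism of `k̄^m` induced by a matrix
`γ ∈ GL_m(𝔽_q)` via base extension. -/
noncomputable def matEnd (k : Type*) [Field k] [Fintype k] (m : ℕ)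
    (γ : Matrix.GeneralLinearGroup (Fin m) k) :
    Module.End (AlgebraicClosure k) (Fin m → AlgebraicClosure k) :=
  Matrix.mulVecLin
    ((γ : Matrix (Fin m) (Fin m) k).map (algebraMap k (AlgebraicClosure k)))

/-- `V` is a `γ`-invariant subspace: `γ(V) = V`. -/
def IsInvt (k : Type*) [Field k] [Fintype k] (m : ℕ)
    (γ : Matrix.GeneralLinearGroup (Fin m) k)
    (V : Submodule (AlgebraicClosure k) (Fin m → AlgebraicClosure k)) : Prop :=
  Submodule.map (matEnd k m γ) V = V

/-- The exponent of `V`: the least `e ≥ 1` such that `γ^e` acts on `V` as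
multiplication by a scalar. -/
noncomputable def expV (k : Type*) [Field k] [Fintype k] (m : ℕ)
    (γ : Matrix.GeneralLinearGroup (Fin m) k)
    (V : Submodule (AlgebraicClosure k) (Fin m → AlgebraicClosure k)) : ℕ :=
  sInf {e : ℕ | 1 ≤ e ∧ ∃ c : AlgebraicClosure k,
    ∀ v ∈ V, (matEnd k m γ ^ e) v = c • v}

/-- `V` is a proper `γ`-invariant subspace. -/
def IsProper (k : Type*) [Field k] [Fintype k] (m : ℕ)
    (γ : Matrix.GeneralLinearGroup (Fin m) k)
    (V : Submodule (AlgebraicClosure k) (Fin m → AlgebraicClosure k)) : Prop :=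
  V ≠ ⊥ ∧ IsInvt k m γ V ∧
    ∀ W : Submodule (AlgebraicClosure k) (Fin m → AlgebraicClosure k),
      W ≠ ⊥ → IsInvt k m γ W → V < W → expV k m γ V < expV k m γ W

/-- The projective automorphism of `ℙ^{m-1}(k̄)` induced by
`g ∈ GL_m(𝔽_q)`. -/
noncomputable def projGamma (k : Type*) [Field k] [Fintype k] (m : ℕ)
    (g : Matrix.GeneralLinearGroup (Fin m) k) :
    Projectivization (AlgebraicClosure k) (Fin m → AlgebraicClosure k) →
    Projectivization (AlgebraicClosure k) (Fin m → AlgebraicClosure k) :=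
  fun P => Projectivization.mk (AlgebraicClosure k)
    (((g : Matrix (Fin m) (Fin m) k).map
        (algebraMap k (AlgebraicClosure k))).mulVec P.rep) (by
      intro h
      apply P.rep_nonzero
      set f := algebraMap k (AlgebraicClosure k)
      have hBA : ((g⁻¹ : Matrix.GeneralLinearGroup (Fin m) k) : Matrix (Fin m) (Fin m) k).map f *
          ((g : Matrix (Fin m) (Fin m) k)).map f = 1 := by
        rw [← Matrix.map_mul]
        norm_cast
        rw [inv_mul_cancel g]
        exact Matrix.map_one f f.map_zero f.map_one
      calc P.rep = (1 : Matrix (Fin m) (Fin m) (AlgebraicClosure k)).mulVec P.rep := by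
            rw [Matrix.one_mulVec]
        _ = _ := by rw [← hBA, ← Matrix.mulVec_mulVec, h, Matrix.mulVec_zero])

/-- The orbit of a projective point `P` under the cyclic group generated by
the projective automorphism induced by `g ∈ GL_m(𝔽_q)`. -/
noncomputable def projOrbit (k : Type*) [Field k] [Fintype k] (m : ℕ)
    (g : Matrix.GeneralLinearGroup (Fin m) k)
    (P : Projectivization (AlgebraicClosure k) (Fin m → AlgebraicClosure k)) :
    Set (Projectivization (AlgebraicClosure k) (Fin m → AlgebraicClosure k)) :=
  {Q | ∃ i : ℤ, Q = projGamma k m (g ^ i) P}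

section Aux

variable {k : Type*} [Field k] [Fintype k] {m : ℕ}

lemma matEnd_mul (g h : Matrix.GeneralLinearGroup (Fin m) k) :
    matEnd k m (g * h) = matEnd k m g * matEnd k m h := by
  unfold matEnd
  rw [Module.End.mul_eq_comp, ← Matrix.mulVecLin_mul, ← Matrix.map_mul]
  norm_cast

lemma matEnd_one : matEnd k m (1 : Matrix.GeneralLinearGroup (Fin m) k) = 1 := by
  unfold matEnd
  rw [Units.val_one, Matrix.map_one _ (map_zero _) (map_one _), Matrix.mulVecLin_one]
  rfl

lemma matEnd_pow (γ : Matrix.GeneralLinearGroup (Fin m) k) (e : ℕ) :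
    matEnd k m (γ ^ e) = matEnd k m γ ^ e := by
  induction e with
  | zero => simpa using matEnd_one
  | succ n ih => rw [pow_succ, pow_succ, matEnd_mul, ih]

lemma matEnd_inv_mul (γ : Matrix.GeneralLinearGroup (Fin m) k) :
    matEnd k m γ⁻¹ * matEnd k m γ = 1 := by
  rw [← matEnd_mul, inv_mul_cancel, matEnd_one]

lemma matEnd_mul_inv (γ : Matrix.GeneralLinearGroup (Fin m) k) :
    matEnd k m γ * matEnd k m γ⁻¹ = 1 := by
  rw [← matEnd_mul, mul_inv_cancel, matEnd_one]

lemma matEnd_pow_injective (γ : Matrix.GeneralLinearGroup (Fin m) k) (e : ℕ) :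
    Function.Injective (matEnd k m γ ^ e) := by
  have h : matEnd k m ((γ ^ e)⁻¹) * matEnd k m (γ ^ e) = 1 := matEnd_inv_mul _
  rw [matEnd_pow] at h
  intro x y hxy
  have hx := DFunLike.congr_fun h x
  have hy := DFunLike.congr_fun h y
  rw [Module.End.mul_apply] at hx hy
  rw [hxy] at hx
  exact hx.symm.trans hy

lemma matEnd_pow_ne_zero (γ : Matrix.GeneralLinearGroup (Fin m) k) (e : ℕ)
    {w : Fin m → AlgebraicClosure k} (hw : w ≠ 0) : (matEnd k m γ ^ e) w ≠ 0 := by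
  intro h
  exact hw (matEnd_pow_injective γ e (by rw [h, map_zero]))

variable (γ : Matrix.GeneralLinearGroup (Fin m) k)

/-- `γ^e` sends `w` to `c • w`. -/
def PtScal (w : Fin m → AlgebraicClosure k) (e : ℕ) (c : AlgebraicClosure k) : Prop :=
  (matEnd k m γ ^ e) w = c • w

variable {γ}

lemma ptScal_ne_zero {w : Fin m → AlgebraicClosure k} (hw : w ≠ 0) {e : ℕ}
    {c : AlgebraicClosure k} (h : PtScal γ w e c) : c ≠ 0 := by
  intro h0
  exact matEnd_pow_ne_zero γ e hw (by rw [h, h0, zero_smul])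

lemma ptScal_unique {w : Fin m → AlgebraicClosure k} (hw : w ≠ 0) {e : ℕ}
    {c c' : AlgebraicClosure k} (h : PtScal γ w e c) (h' : PtScal γ w e c') : c = c' := by
  have : c • w = c' • w := h.symm.trans h'
  have h2 : (c - c') • w = 0 := by rw [sub_smul, this, sub_self]
  rcases smul_eq_zero.mp h2 with h3 | h3
  · exact sub_eq_zero.mp h3
  · exact absurd h3 hw

lemma ptScal_add {w : Fin m → AlgebraicClosure k} {a b : ℕ} {c d : AlgebraicClosure k}
    (ha : PtScal γ w a c) (hb : PtScal γ w b d) : PtScal γ w (a + b) (c * d) := by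
  unfold PtScal at *
  rw [pow_add, Module.End.mul_apply, hb, map_smul, ha, smul_smul, mul_comm d c]

lemma ptScal_mul {w : Fin m → AlgebraicClosure k} {a : ℕ} {c : AlgebraicClosure k}
    (ha : PtScal γ w a c) (q : ℕ) : PtScal γ w (a * q) (c ^ q) := by
  induction q with
  | zero => simp [PtScal]
  | succ n ih =>
      have := ptScal_add ih ha
      rw [mul_add, mul_one, pow_succ]
      exact this

lemma ptScal_sub {w : Fin m → AlgebraicClosure k} {a b : ℕ} {c d : AlgebraicClosure k}
    (hab : a ≤ b) (ha : PtScal γ w a c) (hc : c ≠ 0) (hb : PtScal γ w b d) :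
    PtScal γ w (b - a) (c⁻¹ * d) := by
  unfold PtScal at *
  have key : (matEnd k m γ ^ (b - a)) (c • w) = d • w := by
    rw [← ha, ← Module.End.mul_apply, ← pow_add, Nat.sub_add_cancel hab, hb]
  rw [map_smul] at key
  rw [mul_smul, ← key, smul_smul, inv_mul_cancel₀ hc, one_smul]

/-- The least exponent with scalar action on a fixed vector divides any other. -/
lemma ptScal_sInf_dvd {w : Fin m → AlgebraicClosure k} (hw : w ≠ 0) {e : ℕ}
    {c : AlgebraicClosure k} (he : 1 ≤ e) (hc : PtScal γ w e c) :
    sInf {e : ℕ | 1 ≤ e ∧ ∃ c, PtScal γ w e c} ∣ e := by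
  set T := {e : ℕ | 1 ≤ e ∧ ∃ c, PtScal γ w e c} with hT
  have hne : T.Nonempty := ⟨e, he, c, hc⟩
  obtain ⟨hD1, cD, hcD⟩ := Nat.sInf_mem hne
  set D := sInf T with hD
  have hD0 : 0 < D := hD1
  have hqr := Nat.div_add_mod e D
  set q := e / D with hq
  set r := e % D with hr
  have hDq : PtScal γ w (D * q) (cD ^ q) := ptScal_mul hcD q
  have hle : D * q ≤ e := by omega
  have hrest : PtScal γ w (e - D * q) ((cD ^ q)⁻¹ * c) :=
    ptScal_sub hle hDq (pow_ne_zero q (ptScal_ne_zero hw hcD)) hc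
  have hrre : e - D * q = r := by omega
  rw [hrre] at hrest
  by_cases hr0 : r = 0
  · exact ⟨q, by omega⟩
  · exfalso
    have hrT : r ∈ T := ⟨by omega, _, hrest⟩
    have : D ≤ r := Nat.sInf_le hrT
    have : r < D := Nat.mod_lt e hD0
    omega

lemma expV_mem (W : Submodule (AlgebraicClosure k) (Fin m → AlgebraicClosure k)) :
    1 ≤ expV k m γ W ∧ ∃ c : AlgebraicClosure k, ∀ w ∈ W, (matEnd k m γ ^ expV k m γ W) w = c • w := by
  apply Nat.sInf_mem (s := {e : ℕ | 1 ≤ e ∧ ∃ c : AlgebraicClosure k,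
    ∀ v ∈ W, (matEnd k m γ ^ e) v = c • v})
  refine ⟨orderOf γ, orderOf_pos γ, 1, fun w _ => ?_⟩
  rw [← matEnd_pow, pow_orderOf_eq_one, matEnd_one, one_smul]
  rfl

lemma expV_le {W : Submodule (AlgebraicClosure k) (Fin m → AlgebraicClosure k)}
    {e : ℕ} {c : AlgebraicClosure k} (he : 1 ≤ e)
    (h : ∀ w ∈ W, (matEnd k m γ ^ e) w = c • w) : expV k m γ W ≤ e :=
  Nat.sInf_le ⟨he, c, h⟩

/-- Eigenspaces of powers of `matEnd` are invariant. -/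
lemma eigen_invt (γ : Matrix.GeneralLinearGroup (Fin m) k) (D : ℕ) (c : AlgebraicClosure k) :
    IsInvt k m γ (LinearMap.ker (matEnd k m γ ^ D - c • (1 : Module.End (AlgebraicClosure k)
      (Fin m → AlgebraicClosure k)))) := by
  have hmem : ∀ w, w ∈ LinearMap.ker (matEnd k m γ ^ D - c • (1 : Module.End (AlgebraicClosure k)
      (Fin m → AlgebraicClosure k))) ↔ (matEnd k m γ ^ D) w = c • w := by
    intro w
    rw [LinearMap.mem_ker, LinearMap.sub_apply, LinearMap.smul_apply, Module.End.one_apply,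
      sub_eq_zero]
  have hAA' : ∀ w, matEnd k m γ (matEnd k m γ⁻¹ w) = w := by
    intro w
    rw [← Module.End.mul_apply, matEnd_mul_inv, Module.End.one_apply]
  have hA'A : ∀ w, matEnd k m γ⁻¹ (matEnd k m γ w) = w := by
    intro w
    rw [← Module.End.mul_apply, matEnd_inv_mul, Module.End.one_apply]
  have hcomm : ∀ w, (matEnd k m γ ^ D) (matEnd k m γ w) = matEnd k m γ ((matEnd k m γ ^ D) w) := by
    intro w
    rw [← Module.End.mul_apply, ← Module.End.mul_apply,
      ((Commute.refl (matEnd k m γ)).pow_right D).eq]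
  have hcomm' : ∀ w, (matEnd k m γ ^ D) (matEnd k m γ⁻¹ w)
      = matEnd k m γ⁻¹ ((matEnd k m γ ^ D) w) := by
    intro w
    conv_lhs => rw [← hA'A ((matEnd k m γ ^ D) (matEnd k m γ⁻¹ w))]
    rw [← hcomm, hAA']
  apply le_antisymm
  · rintro w ⟨u, hu, rfl⟩
    have hu' : (matEnd k m γ ^ D) u = c • u := (hmem u).mp hu
    exact (hmem _).mpr (by rw [hcomm u, hu', map_smul])
  · intro w hw
    have hw' : (matEnd k m γ ^ D) w = c • w := (hmem w).mp hw
    exact ⟨matEnd k m γ⁻¹ w, (hmem _).mpr (by rw [hcomm' w, hw', map_smul]), hAA' w⟩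

end Aux

/-- Let `V` be a proper `γ`-invariant subspace of `k̄^{N+1}` and let
`P ∈ ℙ(V)` be a point lying in no `ℙ(W)` for a proper `γ`-invariant
subspace `W` strictly contained in `V`.  Then the orbit of `P` under the
cyclic group generated by the projective automorphism induced by `γ` has
exactly `exp V` elements. -/
theorem stmt16 (k : Type*) [Field k] [Fintype k] (N : ℕ)
    (γ : Matrix.GeneralLinearGroup (Fin (N + 1)) k)
    (V : Submodule (AlgebraicClosure k) (Fin (N + 1) → AlgebraicClosure k))
    (hV : IsProper k (N + 1) γ V)
    (P : Projectivization (AlgebraicClosure k) (Fin (N + 1) → AlgebraicClosure k))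
    (hPV : P.rep ∈ V)
    (hPmin : ∀ W : Submodule (AlgebraicClosure k) (Fin (N + 1) → AlgebraicClosure k),
      IsProper k (N + 1) γ W → W < V → P.rep ∉ W) :
    (projOrbit k (N + 1) γ P).ncard = expV k (N + 1) γ V := by
  classical
  set A := matEnd k (N + 1) γ with hA
  set v := P.rep with hv_def
  have hv : v ≠ 0 := P.rep_nonzero
  set n := orderOf γ with hn_def
  have hn0 : 0 < n := orderOf_pos γ
  -- the period set of v
  set T := {e : ℕ | 1 ≤ e ∧ ∃ c, PtScal γ v e c} with hT
  have hAn : ∀ w : Fin (N + 1) → AlgebraicClosure k, (A ^ n) w = w := by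
    intro w
    rw [← matEnd_pow, pow_orderOf_eq_one, matEnd_one, Module.End.one_apply]
  have hTne : T.Nonempty := ⟨n, hn0, 1, by rw [PtScal, hAn, one_smul]⟩
  set D := sInf T with hD_def
  obtain ⟨hD1, c, hc⟩ := Nat.sInf_mem hTne
  have hc0 : c ≠ 0 := ptScal_ne_zero hv hc
  -- Part I: the orbit has D elements
  have hnz : ∀ j : ℕ, (A ^ j) v ≠ 0 := fun j => matEnd_pow_ne_zero γ j hv
  set F : ℕ → Projectivization (AlgebraicClosure k) (Fin (N + 1) → AlgebraicClosure k) :=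
    fun j => Projectivization.mk (AlgebraicClosure k) ((A ^ j) v) (hnz j) with hF
  have hproj : ∀ (g : Matrix.GeneralLinearGroup (Fin (N + 1)) k) (h : matEnd k (N + 1) g P.rep ≠ 0),
      projGamma k (N + 1) g P = Projectivization.mk (AlgebraicClosure k) (matEnd k (N + 1) g P.rep) h := by
    intro g h
    rfl
  have horbit : projOrbit k (N + 1) γ P = Set.range F := by
    ext Q
    constructor
    · rintro ⟨i, rfl⟩
      set j := (i % (n : ℤ)).toNat with hj
      have hzp : γ ^ i = γ ^ j := by
        rw [← zpow_mod_orderOf γ i, ← hn_def, ← zpow_natCast γ j, hj,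
          Int.toNat_of_nonneg (Int.emod_nonneg i (by exact_mod_cast hn0.ne'))]
      refine ⟨j, ?_⟩
      rw [hproj (γ ^ i) (by rw [hzp, matEnd_pow]; exact hnz j)]
      simp only [hF]
      congr 1
      rw [hzp, matEnd_pow]
    · rintro ⟨j, rfl⟩
      refine ⟨(j : ℤ), ?_⟩
      rw [hproj (γ ^ (j : ℤ)) (by rw [zpow_natCast, matEnd_pow]; exact hnz j)]
      simp only [hF]
      congr 1
      rw [zpow_natCast, matEnd_pow]
  have hFper : Function.Periodic F D := by
    intro j
    simp only [hF]
    rw [Projectivization.mk_eq_mk_iff]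
    refine ⟨Units.mk0 c hc0, ?_⟩
    rw [Units.smul_def, Units.val_mk0, pow_add, Module.End.mul_apply, hc, map_smul]
  have hrange : Set.range F = F '' Set.Iio D := by
    apply le_antisymm
    · rintro Q ⟨j, rfl⟩
      exact ⟨j % D, Nat.mod_lt j hD1, hFper.map_mod_nat j⟩
    · rintro Q ⟨j, _, rfl⟩
      exact ⟨j, rfl⟩
  have hinj : Set.InjOn F (Set.Iio D) := by
    have key : ∀ j1 j2, j1 ∈ Set.Iio D → j2 ∈ Set.Iio D → j1 ≤ j2 → F j1 = F j2 → j1 = j2 := by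
      intro j1 j2 h1 h2 hle heq
      by_contra hne
      have hlt : j1 < j2 := lt_of_le_of_ne hle hne
      have he1 : 1 ≤ j2 - j1 := by omega
      have heD : j2 - j1 < D := by simp only [Set.mem_Iio] at h2; omega
      simp only [hF] at heq
      rw [Projectivization.mk_eq_mk_iff] at heq
      obtain ⟨a, ha⟩ := heq
      have hj2 : (A ^ j2) v = (A ^ j1) ((A ^ (j2 - j1)) v) := by
        have hj : j2 = j1 + (j2 - j1) := by omega
        rw [← Module.End.mul_apply, ← pow_add, ← hj]
      rw [hj2, Units.smul_def, ← map_smul] at ha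
      have ha' : (a : AlgebraicClosure k) • (A ^ (j2 - j1)) v = v := matEnd_pow_injective γ j1 ha
      have hpt : PtScal γ v (j2 - j1) ((a⁻¹ : (AlgebraicClosure k)ˣ) : AlgebraicClosure k) := by
        rw [PtScal]
        calc (A ^ (j2 - j1)) v = ((a⁻¹ : (AlgebraicClosure k)ˣ) : AlgebraicClosure k) • ((a : AlgebraicClosure k) • (A ^ (j2 - j1)) v) := by
              rw [smul_smul]
              norm_cast
              rw [inv_mul_cancel, Units.val_one, one_smul]
          _ = ((a⁻¹ : (AlgebraicClosure k)ˣ) : AlgebraicClosure k) • v := by rw [ha']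
      have : D ≤ j2 - j1 := Nat.sInf_le ⟨he1, _, hpt⟩
      omega
    intro j1 h1 j2 h2 heq
    rcases le_total j1 j2 with h | h
    · exact key j1 j2 h1 h2 h heq
    · exact (key j2 j1 h2 h1 h heq.symm).symm
  have hcard : (projOrbit k (N + 1) γ P).ncard = D := by
    rw [horbit, hrange, Set.ncard_image_of_injOn hinj, ← Finset.coe_Iio,
      Set.ncard_coe_finset, Nat.card_Iio]
  -- Part II: D = expV V
  set E := expV k (N + 1) γ V with hE_def
  obtain ⟨hE1, cE, hcE⟩ := expV_mem (γ := γ) V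
  have hDdvdE : D ∣ E := ptScal_sInf_dvd hv hE1 (hcE v hPV)
  have hDleE : D ≤ E := Nat.le_of_dvd hE1 hDdvdE
  have hED : D = E := by
    by_contra hne
    have hlt : D < E := lt_of_le_of_ne hDleE hne
    -- the eigenspace U
    set U := LinearMap.ker (A ^ D - c • (1 : Module.End (AlgebraicClosure k) (Fin (N + 1) → AlgebraicClosure k))) with hU_def
    have hmemU : ∀ w, w ∈ U ↔ (A ^ D) w = c • w := by
      intro w
      rw [hU_def, LinearMap.mem_ker, LinearMap.sub_apply, LinearMap.smul_apply,
        Module.End.one_apply, sub_eq_zero]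
    have hvU : v ∈ U := (hmemU v).mpr hc
    have hUne : U ≠ ⊥ := by
      intro h
      rw [h, Submodule.mem_bot] at hvU
      exact hv hvU
    have hUinv : IsInvt k (N + 1) γ U := eigen_invt γ D c
    have hUscal : ∀ w ∈ U, (A ^ D) w = c • w := fun w hw => (hmemU w).mp hw
    -- expV U = D
    have hEUle : expV k (N + 1) γ U ≤ D := expV_le hD1 hUscal
    obtain ⟨hEU1, cU, hcU⟩ := expV_mem (γ := γ) U
    have hEUdvd : D ∣ expV k (N + 1) γ U := ptScal_sInf_dvd hv hEU1 (hcU v hvU)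
    have hEUeq : expV k (N + 1) γ U = D := le_antisymm hEUle (Nat.le_of_dvd hEU1 hEUdvd)
    -- V is the full eigenspace of A^E for cE
    set V' := LinearMap.ker (A ^ E - cE • (1 : Module.End (AlgebraicClosure k) (Fin (N + 1) → AlgebraicClosure k))) with hV'_def
    have hmemV' : ∀ w, w ∈ V' ↔ (A ^ E) w = cE • w := by
      intro w
      rw [hV'_def, LinearMap.mem_ker, LinearMap.sub_apply, LinearMap.smul_apply,
        Module.End.one_apply, sub_eq_zero]
    have hVV' : V ≤ V' := fun w hw => (hmemV' w).mpr (hcE w hw)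
    have hV'inv : IsInvt k (N + 1) γ V' := eigen_invt γ E cE
    have hV'ne : V' ≠ ⊥ := by
      intro h
      have : v ∈ V' := hVV' hPV
      rw [h, Submodule.mem_bot] at this
      exact hv this
    have hVeq : V = V' := by
      by_contra hneq
      have hlt2 : V < V' := lt_of_le_of_ne hVV' hneq
      have := hV.2.2 V' hV'ne hV'inv hlt2
      have hV'le : expV k (N + 1) γ V' ≤ E :=
        expV_le hE1 (fun w hw => (hmemV' w).mp hw)
      omega
    -- U ≤ V
    obtain ⟨s, hs⟩ := hDdvdE
    have hcEc : cE = c ^ s := by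
      have h1 : PtScal γ v E cE := hcE v hPV
      have h2 : PtScal γ v (D * s) (c ^ s) := ptScal_mul hc s
      rw [← hs] at h2
      exact ptScal_unique hv h1 h2
    have hUV : U ≤ V := by
      intro u hu
      rw [hVeq, hmemV', hcEc, hs]
      have := ptScal_mul ((hmemU u).mp hu : PtScal γ u D c) s
      exact this
    have hUneV : U ≠ V := by
      intro h
      rw [h] at hEUeq
      omega
    have hUltV : U < V := lt_of_le_of_ne hUV hUneV
    -- U is proper
    have hUproper : IsProper k (N + 1) γ U := by
      refine ⟨hUne, hUinv, fun Z hZne hZinv hUZ => ?_⟩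
      rw [hEUeq]
      by_contra hle
      push_neg at hle
      obtain ⟨hEZ1, cZ, hcZ⟩ := expV_mem (γ := γ) Z
      have hvZ : v ∈ Z := hUZ.le hvU
      have hZdvd : D ∣ expV k (N + 1) γ Z := ptScal_sInf_dvd hv hEZ1 (hcZ v hvZ)
      have hZeq : expV k (N + 1) γ Z = D := le_antisymm hle (Nat.le_of_dvd hEZ1 hZdvd)
      have hcZc : cZ = c := by
        have h1 : PtScal γ v (expV k (N + 1) γ Z) cZ := hcZ v hvZ
        rw [hZeq] at h1
        exact ptScal_unique hv h1 hc
      have hZU : Z ≤ U := by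
        intro w hw
        rw [hmemU]
        have := hcZ w hw
        rw [hZeq, hcZc] at this
        exact this
      exact absurd hZU (not_le_of_gt hUZ)
    exact hPmin U hUproper hUltV hvU
  rw [hcard, hED]
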